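/- Let H = [[A,B],[C,D]] ∈ M_N({±1}) be Hadamard with A ∈ M_r({±1}) invertible, r ≤ d, and r² < N. Write Pol(D) = (1/√N)(D − E) with E = C·(√N I_r + √(AᵗA))⁻¹·Pol(A)ᵗ·B. Then ‖E‖_∞ ≤ r²·c·√N/(N − r²), where c = ‖Pol(A) − A/√N‖_∞. -/

import Mathlib

open Matrix

open Matrix in
lemma auxIsUnitOneSub {n : ℕ} (X : Matrix (Fin n) (Fin n) ℝ) (a : ℝ) (ha : a < 1)
    (h : ∀ i, ∑ j, |X i j| ≤ a) : IsUnit (1 - X) := by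
  rcases Nat.eq_zero_or_pos n with h0 | hn
  · subst h0
    exact (Subsingleton.elim (1 : Matrix (Fin 0) (Fin 0) ℝ) (1 - X)) ▸ isUnit_one
  letI : NormedRing (Matrix (Fin n) (Fin n) ℝ) := Matrix.linftyOpNormedRing
  letI : NormedAlgebra ℝ (Matrix (Fin n) (Fin n) ℝ) := Matrix.linftyOpNormedAlgebra
  haveI : CompleteSpace (Matrix (Fin n) (Fin n) ℝ) := FiniteDimensional.complete ℝ _
  refine isUnit_one_sub_of_norm_lt_one ?_
  rw [Matrix.linfty_opNorm_def, ← NNReal.coe_one, NNReal.coe_lt_coe]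
  refine (Finset.sup_lt_iff (by norm_num)).mpr fun i _ => ?_
  rw [← NNReal.coe_lt_coe, NNReal.coe_one, NNReal.coe_sum]
  refine lt_of_le_of_lt ?_ ha
  simpa [Real.norm_eq_abs] using h i

lemma auxRowSumInv {n : ℕ} [NeZero n] (X Z : Matrix (Fin n) (Fin n) ℝ) (a : ℝ)
    (ha : a < 1) (hX : ∀ i, ∑ k, |X i k| ≤ a) (hZ : Z = 1 + X * Z) :
    ∀ i, ∑ j, |Z i j| ≤ (1 - a)⁻¹ := by
  classical
  have hne : (Finset.univ : Finset (Fin n)).Nonempty := Finset.univ_nonempty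
  set s := Finset.univ.sup' hne (fun i => ∑ j, |Z i j|) with hs
  have hle : ∀ i, (∑ j, |Z i j|) ≤ s := fun i => by rw [hs]; exact Finset.le_sup' (fun i => ∑ j, |Z i j|) (Finset.mem_univ i)
  have hs0 : 0 ≤ s :=
    le_trans (Finset.sum_nonneg fun j _ => abs_nonneg _) (hle ⟨0, Nat.pos_of_ne_zero (NeZero.ne n)⟩)
  have key : ∀ i, (∑ j, |Z i j|) ≤ 1 + a * s := by
    intro i
    have h1 : ∑ j, |Z i j| = ∑ j, |(1 : Matrix (Fin n) (Fin n) ℝ) i j + ∑ k, X i k * Z k j| := by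
      conv_lhs => rw [hZ]
      simp [Matrix.add_apply, Matrix.mul_apply]
    rw [h1]
    have h2 : ∑ j, |(1 : Matrix (Fin n) (Fin n) ℝ) i j + ∑ k, X i k * Z k j|
        ≤ ∑ j, (|(1 : Matrix (Fin n) (Fin n) ℝ) i j| + ∑ k, |X i k| * |Z k j|) := by
      refine Finset.sum_le_sum fun j _ => ?_
      refine (abs_add_le _ _).trans (add_le_add_right ?_ _)
      refine (Finset.abs_sum_le_sum_abs _ _).trans ?_
      exact Finset.sum_le_sum fun k _ => (abs_mul _ _).le
    refine h2.trans ?_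
    rw [Finset.sum_add_distrib]
    have h3 : ∑ j, |(1 : Matrix (Fin n) (Fin n) ℝ) i j| = 1 := by
      simp [Matrix.one_apply, apply_ite abs]
    have h4 : ∑ j, ∑ k, |X i k| * |Z k j| = ∑ k, |X i k| * ∑ j, |Z k j| := by
      rw [Finset.sum_comm]
      simp [Finset.mul_sum]
    rw [h3, h4]
    refine add_le_add_right ?_ 1
    calc ∑ k, |X i k| * ∑ j, |Z k j| ≤ ∑ k, |X i k| * s :=
          Finset.sum_le_sum fun k _ => mul_le_mul_of_nonneg_left (hle k) (abs_nonneg _)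
      _ = (∑ k, |X i k|) * s := by rw [Finset.sum_mul]
      _ ≤ a * s := mul_le_mul_of_nonneg_right (hX i) hs0
  have hsle : s ≤ 1 + a * s := by rw [hs]; exact Finset.sup'_le _ _ fun i _ => key i
  have h1a : 0 < 1 - a := by linarith
  have hfin : s ≤ (1 - a)⁻¹ := by
    rw [← one_div, le_div_iff₀ h1a]
    nlinarith
  exact fun i => (hle i).trans hfin


attribute [local instance] Matrix.normedAddCommGroup

section PSDSqrt

open scoped ComplexOrder

/-- The square root of a positive semidefinite matrix, as defined in Mathlib (Dec 2024). -/
noncomputable def Matrix.PosSemidef.sqrt {n 𝕜 : Type*} [Fintype n] [RCLike 𝕜] [DecidableEq n]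
    {A : Matrix n n 𝕜} (hA : A.PosSemidef) : Matrix n n 𝕜 :=
  hA.1.eigenvectorUnitary.1 * diagonal ((↑) ∘ (√·) ∘ hA.1.eigenvalues) *
    (star hA.1.eigenvectorUnitary : Matrix n n 𝕜)

end PSDSqrt

lemma auxSqrtHerm {n : Type*} [Fintype n] [DecidableEq n] {A : Matrix n n ℝ}
    (hA : A.PosSemidef) : (Matrix.PosSemidef.sqrt hA).IsHermitian := by
  unfold Matrix.PosSemidef.sqrt Matrix.IsHermitian
  simp [Matrix.conjTranspose_mul, Matrix.mul_assoc, Matrix.star_eq_conjTranspose,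
    Matrix.conjTranspose_eq_transpose_of_trivial]

lemma auxSqrtMulSelf {n : Type*} [Fintype n] [DecidableEq n] {A : Matrix n n ℝ}
    (hA : A.PosSemidef) : Matrix.PosSemidef.sqrt hA * Matrix.PosSemidef.sqrt hA = A := by
  unfold Matrix.PosSemidef.sqrt
  have hU : (star hA.1.eigenvectorUnitary : Matrix n n ℝ) * hA.1.eigenvectorUnitary.1 = 1 :=
    Unitary.coe_star_mul_self _
  have e : ∀ (P Q R : Matrix n n ℝ), P * Q * R * (P * Q * R) = P * (Q * (R * P) * Q) * R := by
    intro P Q R; simp only [Matrix.mul_assoc]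
  rw [e, hU, Matrix.mul_one, Matrix.diagonal_mul_diagonal]
  conv_rhs => rw [hA.1.spectral_theorem, Unitary.conjStarAlgAut_apply]
  refine congrArg (fun M => _ * M * _) (congrArg diagonal (funext fun i => ?_))
  simp [Real.mul_self_sqrt (hA.eigenvalues_nonneg i)]

/-- Let `H = [[A,B],[C,D]] ∈ M_N(±1)` be Hadamard with `A ∈ M_r(±1)`
invertible, `r ≤ d` and `r² < N`. Write `Pol(D) = (1/√N)(D − E)` with
`E = C·(√N·I + √(AᵗA))⁻¹·Pol(A)ᵗ·B`. Then `‖E‖_∞ ≤ r²·c·√N/(N − r²)`,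
where `c = ‖Pol(A) − A/√N‖_∞`. -/
theorem stmt_11 (N r d : ℕ) (hN : N = r + d) (hrd : r ≤ d) (hrN : r ^ 2 < N)
    (A : Matrix (Fin r) (Fin r) ℝ) (B : Matrix (Fin r) (Fin d) ℝ)
    (C : Matrix (Fin d) (Fin r) ℝ) (D : Matrix (Fin d) (Fin d) ℝ)
    (hsign : ∀ i j, Matrix.fromBlocks A B C D i j = 1 ∨
      Matrix.fromBlocks A B C D i j = -1)
    (hH : Matrix.fromBlocks A B C D * (Matrix.fromBlocks A B C D)ᵀ
      = (N : ℝ) • 1)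
    (hA : IsUnit A.det)
    (PA : Matrix (Fin r) (Fin r) ℝ) (hPA : PAᵀ * PA = 1)
    (hPApol : A = PA * (Matrix.PosSemidef.sqrt (Matrix.posSemidef_conjTranspose_mul_self A))) :
    letI E := C * ((Real.sqrt N • (1 : Matrix (Fin r) (Fin r) ℝ) +
      (Matrix.PosSemidef.sqrt (Matrix.posSemidef_conjTranspose_mul_self A)))⁻¹ * PAᵀ) * B
    ‖E‖ ≤ r ^ 2 * ‖PA - (Real.sqrt N)⁻¹ • A‖ * Real.sqrt N / (N - r ^ 2) := by
  -- basic positivity facts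
  have hNpos : (0:ℝ) < N := by
    have : 0 < N := lt_of_le_of_lt (Nat.zero_le _) hrN
    exact_mod_cast this
  have hNne : (N:ℝ) ≠ 0 := hNpos.ne'
  have hrNR : (r:ℝ)^2 < N := by exact_mod_cast hrN
  have hsub : (0:ℝ) < (N:ℝ) - (r:ℝ)^2 := by linarith
  have hsqrtpos : 0 < Real.sqrt N := Real.sqrt_pos.mpr hNpos
  have hsq : Real.sqrt N * Real.sqrt N = N := Real.mul_self_sqrt hNpos.le
  set c := ‖PA - (Real.sqrt N)⁻¹ • A‖ with hc
  have hc0 : 0 ≤ c := norm_nonneg _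
  rcases Nat.eq_zero_or_pos r with hr0 | hrpos
  · -- degenerate case r = 0
    subst hr0
    have hE : C * ((Real.sqrt N • (1 : Matrix (Fin 0) (Fin 0) ℝ) +
        (Matrix.PosSemidef.sqrt (Matrix.posSemidef_conjTranspose_mul_self A)))⁻¹ * PAᵀ) * B = 0 := by
      ext i j
      simp [Matrix.mul_apply]
    rw [hE, norm_zero]
    norm_num
  haveI : NeZero r := ⟨hrpos.ne'⟩
  set S := (Matrix.PosSemidef.sqrt (Matrix.posSemidef_conjTranspose_mul_self A)) with hSdef
  have hSpsd : S.IsHermitian := auxSqrtHerm (Matrix.posSemidef_conjTranspose_mul_self A)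
  have hSS : S * S = Aᵀ * A := by
    rw [← Matrix.conjTranspose_eq_transpose_of_trivial]
    exact auxSqrtMulSelf (Matrix.posSemidef_conjTranspose_mul_self A)
  have hST : Sᵀ = S := by
    rw [← Matrix.conjTranspose_eq_transpose_of_trivial]
    exact hSpsd
  -- entries of A, B, C are ±1
  have hAe : ∀ i j, |A i j| = 1 := by
    intro i j
    rcases hsign (Sum.inl i) (Sum.inl j) with h | h <;>
      simp only [Matrix.fromBlocks_apply₁₁] at h <;> simp [h]
  have hBe : ∀ i j, |B i j| = 1 := by
    intro i j
    rcases hsign (Sum.inl i) (Sum.inr j) with h | h <;>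
      simp only [Matrix.fromBlocks_apply₁₂] at h <;> simp [h]
  have hCe : ∀ i j, |C i j| = 1 := by
    intro i j
    rcases hsign (Sum.inr i) (Sum.inl j) with h | h <;>
      simp only [Matrix.fromBlocks_apply₂₁] at h <;> simp [h]
  -- the matrix X = AᵀA / N has small row sums
  set X := (N:ℝ)⁻¹ • (Aᵀ * A) with hXdef
  have hXrow : ∀ i, ∑ k, |X i k| ≤ (r:ℝ)^2 / N := by
    intro i
    have h1 : ∀ k, |X i k| ≤ (r:ℝ) / N := by
      intro k
      have : |(Aᵀ * A) i k| ≤ (r:ℝ) := by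
        rw [Matrix.mul_apply]
        refine (Finset.abs_sum_le_sum_abs _ _).trans ?_
        have h2 : ∀ m ∈ Finset.univ, |Aᵀ i m * A m k| = (1:ℝ) := fun m _ => by
          rw [Matrix.transpose_apply, abs_mul, hAe, hAe, one_mul]
        rw [Finset.sum_congr rfl h2]
        simp
      calc |X i k| = (N:ℝ)⁻¹ * |(Aᵀ * A) i k| := by
            rw [hXdef, Matrix.smul_apply, smul_eq_mul, abs_mul, abs_of_nonneg (by positivity)]
        _ ≤ (N:ℝ)⁻¹ * r := by
            exact mul_le_mul_of_nonneg_left this (by positivity)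
        _ = (r:ℝ) / N := by ring
    calc ∑ k, |X i k| ≤ ∑ k : Fin r, (r:ℝ) / N := Finset.sum_le_sum fun k _ => h1 k
      _ = (r:ℝ)^2 / N := by
          rw [Finset.sum_const, Finset.card_univ, Fintype.card_fin, nsmul_eq_mul]
          ring
  have ha : (r:ℝ)^2 / N < 1 := (div_lt_one hNpos).mpr hrNR
  have hUnit : IsUnit (1 - X) := auxIsUnitOneSub X _ ha hXrow
  have hdet1X : IsUnit (1 - X).det := (Matrix.isUnit_iff_isUnit_det _).mp hUnit
  set Z := (1 - X)⁻¹ with hZdef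
  have hZ1 : (1 - X) * Z = 1 := Matrix.mul_nonsing_inv _ hdet1X
  have hZ2 : Z * (1 - X) = 1 := Matrix.nonsing_inv_mul _ hdet1X
  have hZrec : Z = 1 + X * Z := by
    have := hZ1
    rw [Matrix.sub_mul, one_mul] at this
    linear_combination (norm := abel) this
  have hZrow : ∀ i, ∑ j, |Z i j| ≤ (1 - (r:ℝ)^2 / N)⁻¹ := auxRowSumInv X Z _ ha hXrow hZrec
  -- factorization of W = N•(1-X)
  set W := (N:ℝ) • ((1 : Matrix (Fin r) (Fin r) ℝ) - X) with hWdef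
  set T := Real.sqrt N • (1 : Matrix (Fin r) (Fin r) ℝ) + S with hTdef
  have hfact : (Real.sqrt N • (1 : Matrix (Fin r) (Fin r) ℝ) - S) * T = W := by
    have hNX : (N:ℝ) • X = Aᵀ * A := by
      rw [hXdef, smul_smul, mul_inv_cancel₀ hNne, one_smul]
    rw [hTdef, hWdef, smul_sub, hNX]
    simp only [Matrix.sub_mul, Matrix.mul_add, Matrix.add_mul, Matrix.smul_mul,
      Matrix.mul_smul, one_mul, mul_one, smul_add, smul_sub, smul_smul, hsq, hSS]
    abel
  have hTdet : IsUnit T.det := by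
    have hWdet : IsUnit W.det := by
      rw [hWdef, Matrix.det_smul]
      refine ((isUnit_iff_ne_zero.mpr (pow_ne_zero _ hNne)).mul hdet1X)
    rw [← hfact, Matrix.det_mul] at hWdet
    exact isUnit_of_mul_isUnit_right hWdet
  set Y := Real.sqrt N • PA - A with hYdef
  have hWM : W * (T⁻¹ * PAᵀ) = Yᵀ := by
    have hTT : T * T⁻¹ = 1 := Matrix.mul_nonsing_inv _ hTdet
    have hSPA : S * PAᵀ = Aᵀ := by
      rw [hPApol, Matrix.transpose_mul, hST]
    calc W * (T⁻¹ * PAᵀ)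
        = (Real.sqrt N • (1 : Matrix (Fin r) (Fin r) ℝ) - S) * (T * (T⁻¹ * PAᵀ)) := by
          rw [← hfact, mul_assoc]
      _ = (Real.sqrt N • (1 : Matrix (Fin r) (Fin r) ℝ) - S) * PAᵀ := by
          rw [← mul_assoc T, hTT, one_mul]
      _ = Yᵀ := by
          rw [hYdef, Matrix.transpose_sub, Matrix.transpose_smul, Matrix.sub_mul,
            Matrix.smul_mul, one_mul, hSPA]
  have hM : T⁻¹ * PAᵀ = (N:ℝ)⁻¹ • (Z * Yᵀ) := by
    have h1 : ((N:ℝ)⁻¹ • Z) * W = 1 := by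
      rw [hWdef, Matrix.smul_mul, Matrix.mul_smul, smul_smul, inv_mul_cancel₀ hNne,
        one_smul, hZ2]
    calc T⁻¹ * PAᵀ = 1 * (T⁻¹ * PAᵀ) := (one_mul _).symm
      _ = ((N:ℝ)⁻¹ • Z) * (W * (T⁻¹ * PAᵀ)) := by rw [← h1, mul_assoc]
      _ = ((N:ℝ)⁻¹ • Z) * Yᵀ := by rw [hWM]
      _ = (N:ℝ)⁻¹ • (Z * Yᵀ) := smul_mul_assoc _ _ _
  set M' := (N:ℝ)⁻¹ • (Z * Yᵀ) with hM'def
  -- entry bound on Y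
  have hYe : ∀ l m, |Y l m| ≤ Real.sqrt N * c := by
    intro l m
    have h1 : Y l m = Real.sqrt N * ((PA - (Real.sqrt N)⁻¹ • A) l m) := by
      rw [hYdef]
      simp only [Matrix.sub_apply, Matrix.smul_apply, smul_eq_mul]
      rw [mul_sub]
      congr 1
      rw [← mul_assoc, mul_inv_cancel₀ hsqrtpos.ne', one_mul]
    rw [h1, abs_mul, abs_of_pos hsqrtpos]
    refine mul_le_mul_of_nonneg_left ?_ hsqrtpos.le
    exact (Matrix.norm_entry_le_entrywise_sup_norm _).trans_eq hc.symm
  -- entry bound on the middle matrix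
  have hMid : ∀ (k l : Fin r), |M' k l| ≤ Real.sqrt N * c / ((N:ℝ) - (r:ℝ)^2) := by
    intro k l
    have h1 : |(Z * Yᵀ) k l| ≤ (1 - (r:ℝ)^2 / N)⁻¹ * (Real.sqrt N * c) := by
      rw [Matrix.mul_apply]
      refine (Finset.abs_sum_le_sum_abs _ _).trans ?_
      calc ∑ m, |Z k m * Yᵀ m l| = ∑ m, |Z k m| * |Y l m| := by
            simp [abs_mul, Matrix.transpose_apply]
        _ ≤ ∑ m, |Z k m| * (Real.sqrt N * c) :=
            Finset.sum_le_sum fun m _ => mul_le_mul_of_nonneg_left (hYe l m) (abs_nonneg _)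
        _ = (∑ m, |Z k m|) * (Real.sqrt N * c) := by rw [Finset.sum_mul]
        _ ≤ (1 - (r:ℝ)^2 / N)⁻¹ * (Real.sqrt N * c) :=
            mul_le_mul_of_nonneg_right (hZrow k) (by positivity)
    have h2 : |M' k l| = (N:ℝ)⁻¹ * |(Z * Yᵀ) k l| := by
      rw [hM'def, Matrix.smul_apply, smul_eq_mul, abs_mul, abs_of_nonneg (by positivity)]
    rw [h2]
    have hs' : (N:ℝ) - (r:ℝ)^2 ≠ 0 := hsub.ne'
    have h3 : (N:ℝ)⁻¹ * ((1 - (r:ℝ)^2 / N)⁻¹ * (Real.sqrt N * c))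
        = Real.sqrt N * c / ((N:ℝ) - (r:ℝ)^2) := by
      rw [show (1:ℝ) - (r:ℝ)^2 / N = ((N:ℝ) - (r:ℝ)^2) / N from by field_simp]
      rw [inv_div]
      field_simp
    rw [← h3]
    exact mul_le_mul_of_nonneg_left h1 (by positivity)
  -- final entrywise bound
  have hgoal0 : 0 ≤ (r:ℝ) ^ 2 * c * Real.sqrt N / ((N:ℝ) - (r:ℝ) ^ 2) := by positivity
  refine (Matrix.norm_le_iff hgoal0).mpr fun i j => ?_
  have hEentry : (C * (T⁻¹ * PAᵀ) * B) i j
      = ∑ l, (∑ k, C i k * M' k l) * B l j := by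
    rw [hM]
    simp [Matrix.mul_apply]
  rw [Real.norm_eq_abs, hEentry]
  calc |∑ l, (∑ k, C i k * M' k l) * B l j|
      ≤ ∑ l, |∑ k, C i k * M' k l| * |B l j| := by
        refine (Finset.abs_sum_le_sum_abs _ _).trans ?_
        exact Finset.sum_le_sum fun l _ => (abs_mul _ _).le
    _ = ∑ l, |∑ k, C i k * M' k l| := by simp [hBe]
    _ ≤ ∑ l : Fin r, ∑ k : Fin r, |M' k l| := by
        refine Finset.sum_le_sum fun l _ => ?_
        refine (Finset.abs_sum_le_sum_abs _ _).trans ?_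
        refine Finset.sum_le_sum fun k _ => ?_
        rw [abs_mul, hCe, one_mul]
    _ ≤ ∑ _l : Fin r, ∑ _k : Fin r, Real.sqrt N * c / ((N:ℝ) - (r:ℝ)^2) := by
        refine Finset.sum_le_sum fun l _ => Finset.sum_le_sum fun k _ => hMid k l
    _ = (r:ℝ) ^ 2 * c * Real.sqrt N / ((N:ℝ) - (r:ℝ) ^ 2) := by
        simp [Finset.sum_const, Finset.card_univ]
        ring
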